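/- arXiv:1206.0916 — 3 statements merged into one kernel-verified Lean document; each statement's English description precedes it below -/
import Mathlib

section
/- For the CIR model, the discretized informations satisfy I_Δ(α,β) = I_b(α,β)·(ln a/(a−1))²·a and J_Δ(α,β) = J_b(α,β)·(4a/3)·((a³−1)/(a−1))·(ln a/(a²−1))², where a = e^{αΔ}; and consequently J_Δ(α,β) ≤ I_Δ(α,β) for all Δ > 0. -/
set_option maxHeartbeats 2000000 in
/-- For the CIR model the discretized informations satisfy
`I_Δ = I_b (ln a/(a−1))² a` and
`J_Δ = J_b (4a/3)((a³−1)/(a−1))(ln a/(a²−1))²`, with `a = e^{αΔ}`;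
consequently `J_Δ ≤ I_Δ`. -/
theorem stmt13 (α β x₀ Δ : ℝ) (n : ℕ)
    (hα : 0 < α) (hβ : 0 < β) (hx₀ : 0 < x₀) (hΔ : 0 < Δ) (hn : 1 ≤ n)
    (T a : ℝ) (hTdef : T = n * Δ) (hadef : a = Real.exp (α * Δ))
    (D S : ℕ → ℝ)
    (hD : ∀ k : ℕ, D k = x₀ * Real.exp (α * k * Δ))
    (hS : ∀ k : ℕ, S k = x₀ * β ^ 2 * ((a - 1) / (α * Δ)) * a ^ k)
    (IΔ JΔ Ib Jb : ℝ)
    (hIΔ : IΔ = Δ * ∑ k ∈ Finset.Icc 1 n, (D k) ^ 2 / S k)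
    (hJΔ : JΔ = (Δ * ∑ k ∈ Finset.Icc 1 n, (D k) ^ 2) ^ 2
        / (Δ * ∑ k ∈ Finset.Icc 1 n, (D k) ^ 2 * S k))
    (hIb : Ib = x₀ * (Real.exp (α * T) - 1) / (β ^ 2 * α))
    (hJb : Jb = 3 * x₀ / (4 * α * β ^ 2) * (Real.exp (2 * α * T) - 1) ^ 2
        / (Real.exp (3 * α * T) - 1)) :
    IΔ = Ib * (Real.log a / (a - 1)) ^ 2 * a ∧
      JΔ = Jb * (4 * a / 3) * ((a ^ 3 - 1) / (a - 1)) * (Real.log a / (a ^ 2 - 1)) ^ 2 ∧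
      JΔ ≤ IΔ := by
  have hαΔ : 0 < α * Δ := mul_pos hα hΔ
  have ha1 : 1 < a := by
    rw [hadef]; have := Real.add_one_le_exp (α * Δ); linarith
  have ha0 : 0 < a := lt_trans one_pos ha1
  have hloga : Real.log a = α * Δ := by rw [hadef, Real.log_exp]
  have hak : ∀ k : ℕ, Real.exp (α * k * Δ) = a ^ k := by
    intro k
    rw [hadef, ← Real.exp_nat_mul]
    ring_nf
  have hb : Real.exp (α * T) = a ^ n := by
    rw [hTdef, show α * (↑n * Δ) = α * ↑n * Δ by ring, hak]
  have hb2 : Real.exp (2 * α * T) = (a ^ n) ^ 2 := by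
    rw [show (2:ℝ) * α * T = α * T + α * T by ring, Real.exp_add, hb]; ring
  have hb3 : Real.exp (3 * α * T) = (a ^ n) ^ 3 := by
    rw [show (3:ℝ) * α * T = α * T + (α * T + α * T) by ring, Real.exp_add,
      Real.exp_add, hb]; ring
  set b := a ^ n with hbdef
  have hba : a ≤ b := by
    calc a = a ^ 1 := (pow_one a).symm
    _ ≤ a ^ n := pow_le_pow_right₀ ha1.le hn
  have hb1 : 1 < b := one_lt_pow₀ ha1 (by omega)
  -- geometric sums over Icc 1 n
  have hgeom : ∀ r : ℝ, r ≠ 1 → ∑ k ∈ Finset.Icc 1 n, r ^ k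
      = r * ((r ^ n - 1) / (r - 1)) := by
    intro r hr
    rw [← Finset.Ico_add_one_right_eq_Icc, Finset.sum_Ico_eq_sum_range]
    have h1 : ∀ i : ℕ, r ^ (1 + i) = r * r ^ i := by
      intro i; rw [pow_add, pow_one]
    simp_rw [h1]
    rw [← Finset.mul_sum, geom_sum_eq hr, Nat.add_sub_cancel]
  have ha1' : a ≠ 1 := ne_of_gt ha1
  have ha2 : (a ^ 2 : ℝ) ≠ 1 := ne_of_gt (one_lt_pow₀ ha1 (by norm_num))
  have ha3 : (a ^ 3 : ℝ) ≠ 1 := ne_of_gt (one_lt_pow₀ ha1 (by norm_num))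
  have ha2pos : (0:ℝ) < a ^ 2 - 1 := sub_pos.mpr (one_lt_pow₀ ha1 (by norm_num))
  have ha3pos : (0:ℝ) < a ^ 3 - 1 := sub_pos.mpr (one_lt_pow₀ ha1 (by norm_num))
  have hb3pos : (0:ℝ) < b ^ 3 - 1 := sub_pos.mpr (one_lt_pow₀ hb1 (by norm_num))
  have hane : a - 1 ≠ 0 := sub_ne_zero.mpr ha1'
  have hapos : (0:ℝ) < a - 1 := sub_pos.mpr ha1
  have ha2ne : a ^ 2 - 1 ≠ 0 := ha2pos.ne'
  have ha3ne : a ^ 3 - 1 ≠ 0 := ha3pos.ne'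
  have hb3ne : b ^ 3 - 1 ≠ 0 := hb3pos.ne'
  have hβ2 : (β:ℝ) ^ 2 ≠ 0 := by positivity
  have hαne : α ≠ 0 := hα.ne'
  have hΔne : Δ ≠ 0 := hΔ.ne'
  have hx₀ne : x₀ ≠ 0 := hx₀.ne'
  -- sum 1 : ∑ D^2/S
  have hsum1 : ∑ k ∈ Finset.Icc 1 n, (D k) ^ 2 / S k
      = (x₀ * (α * Δ) / (β ^ 2 * (a - 1))) * (a * ((a ^ n - 1) / (a - 1))) := by
    rw [← hgeom a ha1', Finset.mul_sum]
    refine Finset.sum_congr rfl fun k _ => ?_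
    have hk : (a : ℝ) ^ k ≠ 0 := pow_ne_zero k ha0.ne'
    rw [hD, hS, hak]
    field_simp
  -- sum 2 : ∑ D^2
  have hsum2 : ∑ k ∈ Finset.Icc 1 n, (D k) ^ 2
      = x₀ ^ 2 * (a ^ 2 * (((a ^ 2) ^ n - 1) / (a ^ 2 - 1))) := by
    rw [← hgeom (a ^ 2) ha2, Finset.mul_sum]
    refine Finset.sum_congr rfl fun k _ => ?_
    rw [hD, hak, ← pow_mul]
    ring
  -- sum 3 : ∑ D^2 * S
  have hsum3 : ∑ k ∈ Finset.Icc 1 n, (D k) ^ 2 * S k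
      = (x₀ ^ 3 * β ^ 2 * ((a - 1) / (α * Δ)))
        * (a ^ 3 * (((a ^ 3) ^ n - 1) / (a ^ 3 - 1))) := by
    rw [← hgeom (a ^ 3) ha3, Finset.mul_sum]
    refine Finset.sum_congr rfl fun k _ => ?_
    rw [hD, hS, hak, ← pow_mul]
    ring
  have h2n : (a ^ 2) ^ n = b ^ 2 := pow_right_comm a 2 n
  have h3n : (a ^ 3) ^ n = b ^ 3 := pow_right_comm a 3 n
  -- closed forms
  have hIeq : IΔ = Ib * (Real.log a / (a - 1)) ^ 2 * a := by
    rw [hIΔ, hsum1, hIb, hb, hloga]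
    field_simp
    ring
  have hJeq : JΔ = Jb * (4 * a / 3) * ((a ^ 3 - 1) / (a - 1))
      * (Real.log a / (a ^ 2 - 1)) ^ 2 := by
    rw [hJΔ, hsum2, hsum3, hJb, hb2, hb3, hloga, h2n, h3n]
    field_simp
  refine ⟨hIeq, hJeq, ?_⟩
  -- raw closed forms with common denominator
  have hE : (0:ℝ) < (a - 1) ^ 2 * (a ^ 2 - 1) ^ 2 * (b ^ 3 - 1) :=
    mul_pos (mul_pos (pow_pos hapos 2) (pow_pos ha2pos 2)) hb3pos
  have hC : (0:ℝ) ≤ x₀ * α * Δ ^ 2 * a / β ^ 2 := by positivity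
  have hIraw : IΔ = (x₀ * α * Δ ^ 2 * a / β ^ 2)
      * ((b - 1) * (a ^ 2 - 1) ^ 2 * (b ^ 3 - 1))
      / ((a - 1) ^ 2 * (a ^ 2 - 1) ^ 2 * (b ^ 3 - 1)) := by
    rw [hIΔ, hsum1]
    field_simp
    ring
  have hJraw : JΔ = (x₀ * α * Δ ^ 2 * a / β ^ 2)
      * ((b ^ 2 - 1) ^ 2 * (a ^ 3 - 1) * (a - 1))
      / ((a - 1) ^ 2 * (a ^ 2 - 1) ^ 2 * (b ^ 3 - 1)) := by
    rw [hJΔ, hsum2, hsum3, h2n, h3n]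
    field_simp
  rw [hIraw, hJraw, div_le_div_iff_of_pos_right hE]
  refine mul_le_mul_of_nonneg_left ?_ hC
  have key : (b - 1) * (a ^ 2 - 1) ^ 2 * (b ^ 3 - 1)
      - (b ^ 2 - 1) ^ 2 * (a ^ 3 - 1) * (a - 1)
      = (b - 1) ^ 2 * (a - 1) ^ 2 * ((b - a) * (a * b - 1)) := by ring
  have hab : (1:ℝ) < a * b := one_lt_mul ha1.le hb1
  have h1 : (0:ℝ) ≤ (b - 1) ^ 2 * (a - 1) ^ 2 * ((b - a) * (a * b - 1)) := by
    refine mul_nonneg (mul_nonneg (sq_nonneg _) (sq_nonneg _)) ?_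
    exact mul_nonneg (sub_nonneg.mpr hba) (by linarith)
  have h2 : (0:ℝ) ≤ (b - 1) * (a ^ 2 - 1) ^ 2 * (b ^ 3 - 1)
      - (b ^ 2 - 1) ^ 2 * (a ^ 3 - 1) * (a - 1) := by rw [key]; exact h1
  exact sub_nonneg.mp h2
end

section
/- Let x_{α₀} and x_α solve x' = b(α₀,x) and x' = b(α,x) respectively with the same initial condition, let Φ_α be the resolvent of the linearization y' = (∂b/∂x)(α, x_α(t)) y, and define N_k(α₀,α) = (x_{α₀}(t_k) − x_α(t_k)) − Φ_α(t_k,t_{k-1})(x_{α₀}(t_{k-1}) − x_α(t_{k-1})) and Γ(α₀,α;t) = b(α₀,x_{α₀}(t)) − b(α,x_α(t)) − (∂b/∂x)(α,x_α(t))(x_{α₀}(t) − x_α(t)). Then sup over k ∈ {1,…,n} and α in the compact parameter set of ‖N_k(α₀,α)/Δ − Γ(α₀,α;t_{k-1})‖ → 0 as Δ = T/n → 0. -/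
/-- Uniform approximation `N_k(α₀,α)/Δ ≈ Γ(α₀,α;t_{k-1})`, where
`N_k(α₀,α) = (x_{α₀}(t_k) − x_α(t_k)) − Φ_α(t_k,t_{k-1})(x_{α₀}(t_{k-1}) − x_α(t_{k-1}))` and
`Γ(α₀,α;t) = b(α₀,x_{α₀}(t)) − b(α,x_α(t)) − ∂b/∂x(α,x_α(t))(x_{α₀}(t) − x_α(t))`,
uniformly over `k ∈ {1,…,n}` and `α` in the compact parameter set, as `Δ = T/n → 0`. -/
theorem stmt15 {p a : ℕ} (T : ℝ) (hT : 0 < T)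
    (Ka : Set (Fin a → ℝ)) (hKa : IsCompact Ka)
    (b : (Fin a → ℝ) → (Fin p → ℝ) → (Fin p → ℝ))
    (hb : Continuous fun q : (Fin a → ℝ) × (Fin p → ℝ) => b q.1 q.2)
    (hbC2 : ∀ α ∈ Ka, ContDiff ℝ 2 (b α))
    (L : NNReal) (hLip : ∀ α ∈ Ka, LipschitzWith L (b α))
    (Db : (Fin a → ℝ) → (Fin p → ℝ) → ((Fin p → ℝ) →L[ℝ] (Fin p → ℝ)))
    (hDb : ∀ α ∈ Ka, ∀ y, HasFDerivAt (b α) (Db α y) y)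
    (hDbcont : Continuous fun q : (Fin a → ℝ) × (Fin p → ℝ) => Db q.1 q.2)
    (x₀ : Fin p → ℝ) (α₀ : Fin a → ℝ) (hα₀ : α₀ ∈ Ka)
    (x : (Fin a → ℝ) → ℝ → (Fin p → ℝ))
    (hx0 : ∀ α ∈ Ka, x α 0 = x₀)
    (hx : ∀ α ∈ Ka, ∀ t, HasDerivAt (x α) (b α (x α t)) t)
    (Φ : (Fin a → ℝ) → ℝ → ℝ → ((Fin p → ℝ) →L[ℝ] (Fin p → ℝ)))
    (hΦ1 : ∀ α ∈ Ka, ∀ s : ℝ, Φ α s s = 1)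
    (hΦ : ∀ α ∈ Ka, ∀ s t : ℝ,
      HasDerivAt (fun u => Φ α u s) (Db α (x α t) * Φ α t s) t) :
    ∀ ε > 0, ∃ δ > 0, ∀ n : ℕ, 1 ≤ n → T / n < δ →
      ∀ k ∈ Finset.Icc 1 n, ∀ α ∈ Ka,
        ‖(T / n)⁻¹ •
              ((x α₀ ((k : ℝ) * (T / n)) - x α ((k : ℝ) * (T / n)))
                - Φ α ((k : ℝ) * (T / n)) (((k : ℝ) - 1) * (T / n))
                    (x α₀ (((k : ℝ) - 1) * (T / n)) - x α (((k : ℝ) - 1) * (T / n))))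
            - (b α₀ (x α₀ (((k : ℝ) - 1) * (T / n))) - b α (x α (((k : ℝ) - 1) * (T / n)))
                - Db α (x α (((k : ℝ) - 1) * (T / n)))
                    (x α₀ (((k : ℝ) - 1) * (T / n)) - x α (((k : ℝ) - 1) * (T / n))))‖ < ε := by
  classical
  -- continuity of each trajectory
  have hxc : ∀ α ∈ Ka, Continuous (x α) := fun α hα =>
    continuous_iff_continuousAt.2 fun t => (hx α hα t).continuousAt
  -- bound on `‖b α x₀‖` over the compact parameter set
  obtain ⟨B, hB⟩ := hKa.exists_bound_of_continuousOn
    ((hb.comp (continuous_id.prodMk continuous_const)).continuousOn (s := Ka)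
      (f := fun α => b α x₀))
  have hB0 : 0 ≤ B := (norm_nonneg _).trans (hB α₀ hα₀)
  set K1 : ℝ := (L : ℝ) + 1 with hK1def
  have hK1 : 0 < K1 := by positivity
  set R : ℝ := B / K1 * (Real.exp (K1 * T) - 1) with hRdef
  have hR0 : 0 ≤ R := by
    have : 1 ≤ Real.exp (K1 * T) := Real.one_le_exp (by positivity)
    have := div_nonneg hB0 hK1.le
    nlinarith
  -- trajectories stay in the ball of radius `R`
  have htraj : ∀ α ∈ Ka, ∀ t ∈ Set.Icc (0:ℝ) T, ‖x α t - x₀‖ ≤ R := by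
    intro α hα t ht
    have hgron := norm_le_gronwallBound_of_norm_deriv_right_le
      (f := fun t => x α t - x₀) (f' := fun t => b α (x α t)) (δ := 0) (K := K1) (ε := B)
      (a := 0) (b := T)
      (((hxc α hα).sub continuous_const).continuousOn)
      (fun u _ => ((hx α hα u).sub_const x₀).hasDerivWithinAt)
      (by simp [hx0 α hα])
      (by
        intro u _
        have hL := (hLip α hα).dist_le_mul (x α u) x₀
        simp only [dist_eq_norm] at hL
        calc ‖b α (x α u)‖ = ‖b α x₀ + (b α (x α u) - b α x₀)‖ := by congr 1; abel
          _ ≤ ‖b α x₀‖ + ‖b α (x α u) - b α x₀‖ := norm_add_le _ _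
          _ ≤ B + (L : ℝ) * ‖x α u - x₀‖ := add_le_add (hB α hα) hL
          _ ≤ K1 * ‖x α u - x₀‖ + B := by
              have := norm_nonneg (x α u - x₀); nlinarith)
      t ht
    have hmon : gronwallBound 0 K1 B (t - 0) ≤ R := by
      rw [gronwallBound_of_K_ne_0 hK1.ne']
      have h1 : Real.exp (K1 * (t - 0)) ≤ Real.exp (K1 * T) :=
        Real.exp_le_exp.2 (by nlinarith [ht.1, ht.2])
      have h2 : 1 ≤ Real.exp (K1 * (t - 0)) := Real.one_le_exp (by nlinarith [ht.1])
      have h3 : 0 ≤ B / K1 := div_nonneg hB0 hK1.le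
      rw [hRdef]; nlinarith
    exact hgron.trans hmon
  clear_value K1
  set Kx : Set (Fin p → ℝ) := Metric.closedBall x₀ R with hKxdef
  have htraj' : ∀ α ∈ Ka, ∀ t ∈ Set.Icc (0:ℝ) T, x α t ∈ Kx := by
    intro α hα t ht
    rw [hKxdef, Metric.mem_closedBall, dist_eq_norm]
    exact htraj α hα t ht
  have hKxc : IsCompact Kx := isCompact_closedBall x₀ R
  clear_value Kx
  clear hKxdef hRdef
  clear_value R
  -- bound `M` on `b` and `D` on `Db` over `Ka ×ˢ Kx`
  obtain ⟨M0, hM0⟩ := (hKa.prod hKxc).exists_bound_of_continuousOn hb.continuousOn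
  set M : ℝ := max M0 0 with hMdef
  have hM0' : 0 ≤ M := le_max_right _ _
  have hM : ∀ α ∈ Ka, ∀ y ∈ Kx, ‖b α y‖ ≤ M :=
    fun α hα y hy => le_trans (hM0 (α, y) (Set.mk_mem_prod hα hy)) (le_max_left _ _)
  clear hMdef
  clear_value M
  obtain ⟨D0, hD0⟩ := (hKa.prod hKxc).exists_bound_of_continuousOn hDbcont.continuousOn
  set D : ℝ := max D0 0 with hDdef
  have hD0' : 0 ≤ D := le_max_right _ _
  have hD : ∀ α ∈ Ka, ∀ y ∈ Kx, ‖Db α y‖ ≤ D :=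
    fun α hα y hy => le_trans (hD0 (α, y) (Set.mk_mem_prod hα hy)) (le_max_left _ _)
  clear hDdef
  clear_value D
  -- increments of trajectories
  have hxinc : ∀ α ∈ Ka, ∀ s t : ℝ, s ∈ Set.Icc (0:ℝ) T → t ∈ Set.Icc (0:ℝ) T → s ≤ t →
      ‖x α t - x α s‖ ≤ M * (t - s) := by
    intro α hα s t hs ht hst
    have hcb : Continuous fun u => b α (x α u) :=
      hb.comp (continuous_const.prodMk (hxc α hα))
    have hFTC : ∫ u in s..t, b α (x α u) = x α t - x α s :=
      intervalIntegral.integral_eq_sub_of_hasDerivAt (fun u _ => hx α hα u)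
        (hcb.intervalIntegrable s t)
    rw [← hFTC]
    have := intervalIntegral.norm_integral_le_of_norm_le_const (C := M)
      (f := fun u => b α (x α u)) (a := s) (b := t)
      (by
        intro u hu
        rw [Set.uIoc_of_le hst] at hu
        have huI : u ∈ Set.Icc (0:ℝ) T := ⟨hs.1.trans hu.1.le, hu.2.trans ht.2⟩
        exact hM α hα _ (htraj' α hα u huI))
    rwa [abs_of_nonneg (by linarith)] at this
  -- bound on `‖Φ α t s - 1‖`
  have hΦcont : ∀ α ∈ Ka, ∀ s : ℝ, Continuous fun u => Φ α u s := fun α hα s =>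
    continuous_iff_continuousAt.2 fun t => (hΦ α hα s t).continuousAt
  have hΦb : ∀ α ∈ Ka, ∀ s t : ℝ, s ∈ Set.Icc (0:ℝ) T → t ∈ Set.Icc (0:ℝ) T → s ≤ t →
      ‖Φ α t s - 1‖ ≤ Real.exp ((D + 1) * (t - s)) - 1 := by
    intro α hα s t hs ht hst
    have hD1 : (0:ℝ) < D + 1 := by positivity
    have hgron := norm_le_gronwallBound_of_norm_deriv_right_le
      (f := fun u => Φ α u s - 1) (f' := fun u => Db α (x α u) * Φ α u s)
      (δ := 0) (K := D + 1) (ε := D + 1) (a := s) (b := t)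
      (((hΦcont α hα s).sub continuous_const).continuousOn)
      (fun u _ => ((hΦ α hα s u).sub_const 1).hasDerivWithinAt)
      (by simp [hΦ1 α hα s])
      (by
        intro u hu
        have huI : u ∈ Set.Icc (0:ℝ) T := ⟨hs.1.trans hu.1, hu.2.le.trans ht.2⟩
        have h1 : ‖Db α (x α u)‖ ≤ D := hD α hα _ (htraj' α hα u huI)
        have h2 : ‖Φ α u s‖ ≤ ‖Φ α u s - 1‖ + 1 := by
          have hone : ‖(1 : (Fin p → ℝ) →L[ℝ] (Fin p → ℝ))‖ ≤ 1 := by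
            rw [ContinuousLinearMap.one_def]; exact ContinuousLinearMap.norm_id_le
          calc ‖Φ α u s‖ = ‖(Φ α u s - 1) + 1‖ := by congr 1; abel
            _ ≤ ‖Φ α u s - 1‖ + ‖(1 : (Fin p → ℝ) →L[ℝ] (Fin p → ℝ))‖ := norm_add_le _ _
            _ ≤ ‖Φ α u s - 1‖ + 1 := by linarith
        calc ‖Db α (x α u) * Φ α u s‖ ≤ ‖Db α (x α u)‖ * ‖Φ α u s‖ := norm_mul_le _ _
          _ ≤ D * (‖Φ α u s - 1‖ + 1) := by
              have := norm_nonneg (Φ α u s); nlinarith [norm_nonneg (Φ α u s - 1)]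
          _ ≤ (D + 1) * ‖Φ α u s - 1‖ + (D + 1) := by nlinarith [norm_nonneg (Φ α u s - 1)])
      t ⟨hst, le_refl t⟩
    have : gronwallBound 0 (D + 1) (D + 1) (t - s) = Real.exp ((D + 1) * (t - s)) - 1 := by
      rw [gronwallBound_of_K_ne_0 hD1.ne']
      field_simp
      ring
    rwa [this] at hgron
  -- uniform continuity of `Db` on the compact set
  have hUC := Metric.uniformContinuousOn_iff.mp
    ((hKa.prod hKxc).uniformContinuousOn_of_continuous hDbcont.continuousOn)
  -- main argument
  intro ε hε
  set ε₁ : ℝ := ε / 3 / (2 * R + 1) with hε₁def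
  have hε₁ : 0 < ε₁ := by positivity
  have hε₁e : ε₁ * (2 * R + 1) = ε / 3 := by
    rw [hε₁def]; exact div_mul_cancel₀ _ (by positivity)
  clear hε₁def
  clear_value ε₁
  obtain ⟨δ₁, hδ₁, hδ₁p⟩ := hUC ε₁ hε₁
  set φ : ℝ → ℝ := fun Δ => 2 * (L : ℝ) * M * Δ + 2 * R * D * (Real.exp ((D + 1) * Δ) - 1)
    with hφdef
  have hφc : ContinuousAt φ 0 := by
    apply Continuous.continuousAt
    fun_prop
  obtain ⟨δ₂, hδ₂, hδ₂p⟩ := Metric.continuousAt_iff.mp hφc (ε / 3) (by positivity)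
  have hφ0 : φ 0 = 0 := by rw [hφdef]; simp
  have hφeq : ∀ Δ : ℝ, φ Δ = 2 * (L : ℝ) * M * Δ + 2 * R * D * (Real.exp ((D + 1) * Δ) - 1) :=
    fun Δ => by rw [hφdef]
  clear hφdef
  clear_value φ
  refine ⟨min (δ₁ / (M + 1)) δ₂, lt_min (by positivity) hδ₂, ?_⟩
  intro n hn hΔsm k hk α hα
  have hn0 : (0:ℝ) < (n:ℝ) := by exact_mod_cast Nat.lt_of_lt_of_le Nat.zero_lt_one hn
  set Δ : ℝ := T / (n:ℝ) with hΔdef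
  have hΔ0 : 0 < Δ := div_pos hT hn0
  have hΔδ₁ : Δ < δ₁ / (M + 1) := lt_of_lt_of_le hΔsm (min_le_left _ _)
  have hΔδ₂ : Δ < δ₂ := lt_of_lt_of_le hΔsm (min_le_right _ _)
  rw [Finset.mem_Icc] at hk
  have hk1 : (1:ℝ) ≤ (k:ℝ) := by exact_mod_cast hk.1
  have hkn : (k:ℝ) ≤ (n:ℝ) := by exact_mod_cast hk.2
  set s : ℝ := ((k:ℝ) - 1) * Δ with hsdef
  set t1 : ℝ := (k:ℝ) * Δ with ht1def
  have hs0 : 0 ≤ s := mul_nonneg (by linarith) hΔ0.le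
  have hst : t1 = s + Δ := by rw [hsdef, ht1def]; ring
  have ht1T : t1 ≤ T := by
    rw [ht1def, hΔdef]
    calc (k:ℝ) * (T / n) ≤ (n:ℝ) * (T / n) :=
          mul_le_mul_of_nonneg_right hkn (div_pos hT hn0).le
      _ = T := by field_simp
  have hst' : s ≤ t1 := by rw [hst]; linarith
  have hsI : s ∈ Set.Icc (0:ℝ) T := ⟨hs0, hst'.trans ht1T⟩
  have ht1I : t1 ∈ Set.Icc (0:ℝ) T := ⟨hs0.trans hst', ht1T⟩
  clear hsdef ht1def hΔdef
  clear_value Δ s t1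
  set v : Fin p → ℝ := x α₀ s - x α s with hvdef
  have hv : ‖v‖ ≤ 2 * R := by
    calc ‖v‖ = ‖(x α₀ s - x₀) - (x α s - x₀)‖ := by rw [hvdef]; congr 1; abel
      _ ≤ ‖x α₀ s - x₀‖ + ‖x α s - x₀‖ := norm_sub_le _ _
      _ ≤ R + R := add_le_add (htraj α₀ hα₀ s hsI) (htraj α hα s hsI)
      _ = 2 * R := by ring
  set g : ℝ → (Fin p → ℝ) :=
    fun t => b α₀ (x α₀ t) - b α (x α t) - (Db α (x α t)) ((Φ α t s) v) with hgdef
  set w : ℝ → (Fin p → ℝ) :=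
    fun t => (x α₀ t - x α t) - (Φ α t s) v with hwdef
  have hw : ∀ t : ℝ, HasDerivAt w (g t) t := by
    intro t
    have h2 : HasDerivAt (fun u => (Φ α u s) v) ((Db α (x α t)) ((Φ α t s) v)) t := by
      have := (hΦ α hα s t).clm_apply (hasDerivAt_const t v)
      simpa using this
    exact ((hx α₀ hα₀ t).sub (hx α hα t)).sub h2
  have hws : w s = 0 := by
    simp [hwdef, hΦ1 α hα s, hvdef]
  have hgcont : Continuous g := by
    have h1 : Continuous fun t => b α₀ (x α₀ t) :=
      hb.comp (continuous_const.prodMk (hxc α₀ hα₀))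
    have h2 : Continuous fun t => b α (x α t) :=
      hb.comp (continuous_const.prodMk (hxc α hα))
    have h3 : Continuous fun t => Db α (x α t) :=
      hDbcont.comp (continuous_const.prodMk (hxc α hα))
    have h4 : Continuous fun t => (Φ α t s) v :=
      (hΦcont α hα s).clm_apply continuous_const
    exact (h1.sub h2).sub (h3.clm_apply h4)
  have hFTC : ∫ u in s..t1, g u = w t1 - w s :=
    intervalIntegral.integral_eq_sub_of_hasDerivAt (fun u _ => hw u)
      (hgcont.intervalIntegrable s t1)
  have hgs : g s = b α₀ (x α₀ s) - b α (x α s) - (Db α (x α s)) v := by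
    simp [hgdef, hΦ1 α hα s]
  have hwt1 : w t1 = (x α₀ t1 - x α t1) - (Φ α t1 s) v := by rw [hwdef]
  clear_value v w g
  -- pointwise bound on `‖g u - g s‖`
  have hbnd : ∀ u ∈ Set.uIoc s t1, ‖g u - g s‖ ≤ ε / 3 + ε₁ * (2 * R) := by
    intro u hu
    rw [Set.uIoc_of_le hst'] at hu
    have hus : s ≤ u := hu.1.le
    have husΔ : u - s ≤ Δ := by rw [hst] at hu; linarith [hu.2]
    have huI : u ∈ Set.Icc (0:ℝ) T := ⟨hs0.trans hus, hu.2.trans ht1T⟩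
    have hxu : x α u ∈ Kx := htraj' α hα u huI
    have hxs : x α s ∈ Kx := htraj' α hα s hsI
    -- A1
    have hA1 : ‖b α₀ (x α₀ u) - b α₀ (x α₀ s)‖ ≤ (L : ℝ) * (M * Δ) := by
      have hL := (hLip α₀ hα₀).dist_le_mul (x α₀ u) (x α₀ s)
      simp only [dist_eq_norm] at hL
      have hxi : ‖x α₀ u - x α₀ s‖ ≤ M * Δ :=
        (hxinc α₀ hα₀ s u hsI huI hus).trans (mul_le_mul_of_nonneg_left husΔ hM0')
      exact hL.trans (mul_le_mul_of_nonneg_left hxi (NNReal.coe_nonneg L))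
    have hA2 : ‖b α (x α u) - b α (x α s)‖ ≤ (L : ℝ) * (M * Δ) := by
      have hL := (hLip α hα).dist_le_mul (x α u) (x α s)
      simp only [dist_eq_norm] at hL
      have hxi : ‖x α u - x α s‖ ≤ M * Δ :=
        (hxinc α hα s u hsI huI hus).trans (mul_le_mul_of_nonneg_left husΔ hM0')
      exact hL.trans (mul_le_mul_of_nonneg_left hxi (NNReal.coe_nonneg L))
    -- A3
    have hΦd : ‖Φ α u s - 1‖ ≤ Real.exp ((D + 1) * Δ) - 1 := by
      refine (hΦb α hα s u hsI huI hus).trans ?_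
      have : Real.exp ((D + 1) * (u - s)) ≤ Real.exp ((D + 1) * Δ) :=
        Real.exp_le_exp.2 (mul_le_mul_of_nonneg_left husΔ (by positivity))
      linarith
    have hDbu : ‖Db α (x α u)‖ ≤ D := hD α hα _ hxu
    have hA3 : ‖(Db α (x α u)) ((Φ α u s) v) - (Db α (x α u)) v‖
        ≤ D * ((Real.exp ((D + 1) * Δ) - 1) * (2 * R)) := by
      have heq : (Db α (x α u)) ((Φ α u s) v) - (Db α (x α u)) v
          = (Db α (x α u)) ((Φ α u s - 1) v) := by
        simp [ContinuousLinearMap.sub_apply, map_sub]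
      rw [heq]
      have h1 : (0:ℝ) ≤ Real.exp ((D + 1) * Δ) - 1 := by
        have : (1:ℝ) ≤ Real.exp ((D + 1) * Δ) := Real.one_le_exp (by positivity)
        linarith
      have h2 : ‖(Φ α u s - 1) v‖ ≤ (Real.exp ((D + 1) * Δ) - 1) * (2 * R) :=
        (ContinuousLinearMap.le_opNorm _ _).trans
          (mul_le_mul hΦd hv (norm_nonneg _) h1)
      exact (ContinuousLinearMap.le_opNorm _ _).trans
        (mul_le_mul hDbu h2 (norm_nonneg _) hD0')
    -- A4 via uniform continuity
    have hA4 : ‖(Db α (x α u)) v - (Db α (x α s)) v‖ ≤ ε₁ * (2 * R) := by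
      have hdistx : dist (x α u) (x α s) < δ₁ := by
        rw [dist_eq_norm]
        have hxi := hxinc α hα s u hsI huI hus
        calc ‖x α u - x α s‖ ≤ M * (u - s) := hxi
          _ ≤ M * Δ := mul_le_mul_of_nonneg_left husΔ hM0'
          _ ≤ (M + 1) * Δ := mul_le_mul_of_nonneg_right (by linarith) hΔ0.le
          _ < (M + 1) * (δ₁ / (M + 1)) := by
              apply mul_lt_mul_of_pos_left hΔδ₁ (by positivity)
          _ = δ₁ := by field_simp
      have hdist : dist ((α, x α u) : (Fin a → ℝ) × (Fin p → ℝ)) (α, x α s) < δ₁ := by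
        simp only [Prod.dist_eq, dist_self]
        exact max_lt hδ₁ hdistx
      have hop := hδ₁p (α, x α u) (Set.mk_mem_prod hα hxu) (α, x α s)
        (Set.mk_mem_prod hα hxs) hdist
      rw [dist_eq_norm] at hop
      calc ‖(Db α (x α u)) v - (Db α (x α s)) v‖
          = ‖(Db α (x α u) - Db α (x α s)) v‖ := by rw [ContinuousLinearMap.sub_apply]
        _ ≤ ‖Db α (x α u) - Db α (x α s)‖ * ‖v‖ := ContinuousLinearMap.le_opNorm _ _
        _ ≤ ε₁ * (2 * R) := mul_le_mul hop.le hv (norm_nonneg _) hε₁.le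
    -- assemble
    have hdecomp : g u - g s
        = (b α₀ (x α₀ u) - b α₀ (x α₀ s)) - (b α (x α u) - b α (x α s))
          - ((Db α (x α u)) ((Φ α u s) v) - (Db α (x α u)) v)
          - ((Db α (x α u)) v - (Db α (x α s)) v) := by
      rw [hgs]; simp only [hgdef]; abel
    have hφΔ : 2 * (L : ℝ) * M * Δ + 2 * R * D * (Real.exp ((D + 1) * Δ) - 1) < ε / 3 := by
      have hd : dist Δ (0:ℝ) < δ₂ := by rwa [Real.dist_eq, sub_zero, abs_of_pos hΔ0]
      have h := hδ₂p hd
      rw [Real.dist_eq, hφ0, sub_zero, hφeq] at h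
      exact lt_of_le_of_lt (le_abs_self _) h
    calc ‖g u - g s‖
        ≤ ‖b α₀ (x α₀ u) - b α₀ (x α₀ s)‖ + ‖b α (x α u) - b α (x α s)‖
          + ‖(Db α (x α u)) ((Φ α u s) v) - (Db α (x α u)) v‖
          + ‖(Db α (x α u)) v - (Db α (x α s)) v‖ := by
          rw [hdecomp]
          exact le_trans (norm_sub_le _ _) (le_trans (add_le_add_left (norm_sub_le _ _) _)
            (add_le_add_left (add_le_add_left (norm_sub_le _ _) _) _))
      _ ≤ (L : ℝ) * (M * Δ) + (L : ℝ) * (M * Δ)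
          + D * ((Real.exp ((D + 1) * Δ) - 1) * (2 * R)) + ε₁ * (2 * R) :=
          add_le_add (add_le_add (add_le_add hA1 hA2) hA3) hA4
      _ ≤ ε / 3 + ε₁ * (2 * R) := by linarith [hφΔ]
  -- conclude
  have hkey : Δ⁻¹ • w t1 - g s = Δ⁻¹ • ∫ u in s..t1, (g u - g s) := by
    rw [intervalIntegral.integral_sub (hgcont.intervalIntegrable s t1)
      (intervalIntegrable_const), hFTC, hws, sub_zero, intervalIntegral.integral_const,
      smul_sub, smul_smul]
    have : t1 - s = Δ := by rw [hst]; ring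
    rw [this, inv_mul_cancel₀ hΔ0.ne', one_smul]
  have hnorm : ‖Δ⁻¹ • w t1 - g s‖ ≤ ε / 3 + ε₁ * (2 * R) := by
    rw [hkey, norm_smul, Real.norm_eq_abs, abs_of_pos (inv_pos.2 hΔ0)]
    have hbint := intervalIntegral.norm_integral_le_of_norm_le_const hbnd
    have habs : |t1 - s| = Δ := by rw [hst]; simp [abs_of_pos hΔ0]
    rw [habs] at hbint
    calc Δ⁻¹ * ‖∫ u in s..t1, (g u - g s)‖ ≤ Δ⁻¹ * ((ε / 3 + ε₁ * (2 * R)) * Δ) := by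
          apply mul_le_mul_of_nonneg_left hbint (inv_pos.2 hΔ0).le
      _ = ε / 3 + ε₁ * (2 * R) := by field_simp
  have hfin : ε / 3 + ε₁ * (2 * R) < ε := by linarith [hε₁e, hε₁.le]
  rw [← hwt1, ← hgs]
  exact lt_of_le_of_lt hnorm hfin
end

section
/- Let (X_{n,k})_{1≤k≤n} be random variables with X_{n,k} measurable with respect to a filtration (F_k), such that Σ_{k=1}^n E[X_{n,k} | F_{k-1}] → U in probability for some random variable U, and Σ_{k=1}^n E[X_{n,k}² | F_{k-1}] → 0 in probability. Then Σ_{k=1}^n X_{n,k} → U in probability. -/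
open MeasureTheory Filter
open Topology

set_option linter.unusedSectionVars false

section Aux0
variable {Ω : Type*}

/-- Product of two L² functions is integrable (via AM-GM). -/
lemma aux_mul_int {m0 : MeasurableSpace Ω} {μ : Measure Ω} {f g : Ω → ℝ}
    (hf : MemLp f 2 μ) (hg : MemLp g 2 μ) :
    Integrable (fun ω => f ω * g ω) μ := by
  have hf2 : Integrable (fun ω => f ω ^ 2) μ :=
    (memLp_two_iff_integrable_sq hf.aestronglyMeasurable).mp hf
  have hg2 : Integrable (fun ω => g ω ^ 2) μ :=
    (memLp_two_iff_integrable_sq hg.aestronglyMeasurable).mp hg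
  refine Integrable.mono' ((hf2.add hg2).div_const 2)
    (hf.aestronglyMeasurable.mul hg.aestronglyMeasurable) ?_
  refine Eventually.of_forall fun ω => ?_
  rw [Real.norm_eq_abs, abs_mul]
  simp only [Pi.add_apply]
  nlinarith [sq_nonneg (|f ω| - |g ω|), sq_abs (f ω), sq_abs (g ω),
    abs_nonneg (f ω), abs_nonneg (g ω)]

/-- Conditional expectation of an L² function is L². -/
lemma aux_condexp_L2 {m m0 : MeasurableSpace Ω} {μ : Measure Ω} [IsFiniteMeasure μ]
    (hm : m ≤ m0) {f : Ω → ℝ} (hf : MemLp f 2 μ) :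
    MemLp (μ[f|m]) 2 μ := by
  set F : Lp ℝ 2 μ := hf.toLp f with hF
  set G : Lp ℝ 2 μ := (condExpL2 ℝ ℝ hm F : Lp ℝ 2 μ) with hG
  have heq : (G : Ω → ℝ) =ᵐ[μ] μ[f|m] := by
    refine ae_eq_condExp_of_forall_setIntegral_eq hm (hf.integrable one_le_two)
      (fun s _ _ => ((Lp.memLp G).integrable one_le_two).integrableOn)
      (fun s hs hμs => ?_) ?_
    · rw [integral_condExpL2_eq hm F hs hμs.ne]
      exact integral_congr_ae (ae_restrict_of_ae hf.coeFn_toLp)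
    · exact lpMeas.aestronglyMeasurable _
  exact (Lp.memLp G).ae_eq heq

end Aux0

section Aux
variable {Ω : Type*} {m0 : MeasurableSpace Ω}

noncomputable def auxQ (μ : Measure Ω) (𝒢 : ℕ → MeasurableSpace Ω) (X : ℕ → Ω → ℝ)
    (k : ℕ) : Ω → ℝ := μ[X k|𝒢 (k-1)]

noncomputable def auxG (μ : Measure Ω) (𝒢 : ℕ → MeasurableSpace Ω) (X : ℕ → Ω → ℝ)
    (k : ℕ) : Ω → ℝ := μ[fun ω' => X k ω' ^ 2|𝒢 (k-1)]

noncomputable def auxY (μ : Measure Ω) (𝒢 : ℕ → MeasurableSpace Ω) (X : ℕ → Ω → ℝ)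
    (k : ℕ) (ω : Ω) : ℝ := X k ω - auxQ μ 𝒢 X k ω

noncomputable def auxC (μ : Measure Ω) (𝒢 : ℕ → MeasurableSpace Ω) (X : ℕ → Ω → ℝ)
    (η : ℝ) (k : ℕ) (ω : Ω) : ℝ :=
  if (∑ i ∈ Finset.Icc 1 k, auxG μ 𝒢 X i ω) ≤ η then 1 else 0

noncomputable def auxZ (μ : Measure Ω) (𝒢 : ℕ → MeasurableSpace Ω) (X : ℕ → Ω → ℝ)
    (η : ℝ) (k : ℕ) (ω : Ω) : ℝ := auxC μ 𝒢 X η k ω * auxY μ 𝒢 X k ω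

lemma auxC_mem (μ : Measure Ω) (𝒢 : ℕ → MeasurableSpace Ω) (X : ℕ → Ω → ℝ)
    (η : ℝ) (k : ℕ) (ω : Ω) : auxC μ 𝒢 X η k ω = 0 ∨ auxC μ 𝒢 X η k ω = 1 := by
  unfold auxC; split <;> simp

lemma auxC_nonneg (μ : Measure Ω) (𝒢 : ℕ → MeasurableSpace Ω) (X : ℕ → Ω → ℝ)
    (η : ℝ) (k : ℕ) (ω : Ω) : 0 ≤ auxC μ 𝒢 X η k ω := by
  rcases auxC_mem μ 𝒢 X η k ω with h | h <;> simp [h]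

variable {μ : Measure Ω} [IsProbabilityMeasure μ]
  {𝒢 : ℕ → MeasurableSpace Ω} (hle : ∀ k, 𝒢 k ≤ m0) (hmono : Monotone 𝒢)
  {X : ℕ → Ω → ℝ} (hmeas : ∀ k, StronglyMeasurable[𝒢 k] (X k))
  (hint : ∀ k, Integrable (X k) μ) (hint2 : ∀ k, Integrable (fun ω => X k ω ^ 2) μ)
  {η : ℝ}

include hint hint2 in
lemma auxX_L2 (k : ℕ) : MemLp (X k) 2 μ :=
  (memLp_two_iff_integrable_sq (hint k).aestronglyMeasurable).mpr (hint2 k)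

include hle hint hint2 in
lemma auxQ_L2 (k : ℕ) : MemLp (auxQ μ 𝒢 X k) 2 μ :=
  aux_condexp_L2 (hle (k-1)) (auxX_L2 hint hint2 k)

include hle hint hint2 in
lemma auxY_L2 (k : ℕ) : MemLp (auxY μ 𝒢 X k) 2 μ :=
  (auxX_L2 hint hint2 k).sub (auxQ_L2 hle hint hint2 k)

include hmono in
lemma auxC_SM (k : ℕ) : StronglyMeasurable[𝒢 (k-1)] (auxC μ 𝒢 X η k) := by
  have hsum : StronglyMeasurable[𝒢 (k-1)] (fun ω => ∑ i ∈ Finset.Icc 1 k, auxG μ 𝒢 X i ω) := by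
    refine Finset.stronglyMeasurable_fun_sum _ fun i hi => ?_
    have hi' : i - 1 ≤ k - 1 := by
      have := (Finset.mem_Icc.mp hi); omega
    exact stronglyMeasurable_condExp.mono (hmono hi')
  exact StronglyMeasurable.ite (hsum.measurable measurableSet_Iic)
    stronglyMeasurable_const stronglyMeasurable_const

include hle hmono hint hint2 in
lemma auxZ_L2 (k : ℕ) : MemLp (auxZ μ 𝒢 X η k) 2 μ := by
  refine MemLp.of_le (auxY_L2 hle hint hint2 k)
    ((((auxC_SM hmono k).mono (hle _)).aestronglyMeasurable).mul
      (auxY_L2 hle hint hint2 k).aestronglyMeasurable)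
    (Eventually.of_forall fun ω => ?_)
  rw [Real.norm_eq_abs, Real.norm_eq_abs, auxZ, abs_mul]
  calc |auxC μ 𝒢 X η k ω| * |auxY μ 𝒢 X k ω| ≤ 1 * |auxY μ 𝒢 X k ω| := by
        rcases auxC_mem μ 𝒢 X η k ω with h | h <;> simp [h, abs_nonneg]
    _ = |auxY μ 𝒢 X k ω| := one_mul _

include hmono hmeas in
lemma auxZ_SM (k : ℕ) : StronglyMeasurable[𝒢 k] (auxZ μ 𝒢 X η k) := by
  have h1 : StronglyMeasurable[𝒢 k] (auxY μ 𝒢 X k) :=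
    (hmeas k).sub (stronglyMeasurable_condExp.mono (hmono (Nat.sub_le k 1)))
  exact ((auxC_SM hmono k).mono (hmono (Nat.sub_le k 1))).mul h1

include hle hint in
lemma auxY_condexp_zero (k : ℕ) : μ[auxY μ 𝒢 X k|𝒢 (k-1)] =ᵐ[μ] 0 := by
  have h1 : μ[auxY μ 𝒢 X k|𝒢 (k-1)] =ᵐ[μ]
      μ[X k|𝒢 (k-1)] - μ[auxQ μ 𝒢 X k|𝒢 (k-1)] :=
    condExp_sub (hint k) integrable_condExp _
  have h2 : μ[auxQ μ 𝒢 X k|𝒢 (k-1)] = auxQ μ 𝒢 X k :=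
    condExp_of_stronglyMeasurable (hle _) stronglyMeasurable_condExp integrable_condExp
  filter_upwards [h1] with ω hω
  rw [Pi.zero_apply, hω, Pi.sub_apply, h2]
  simp [auxQ]

include hle hmono hmeas hint hint2 in
lemma aux_cross {n : ℕ} {j k : ℕ} (hk : k ∈ Finset.Icc 1 n) (hj : j ∈ Finset.Icc 1 n)
    (hkj : k < j) : ∫ ω, auxZ μ 𝒢 X η j ω * auxZ μ 𝒢 X η k ω ∂μ = 0 := by
  have hm : 𝒢 (j-1) ≤ m0 := hle _
  have hkj' : k ≤ j - 1 := by omega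
  have hWSM : StronglyMeasurable[𝒢 (j-1)] (fun ω => auxC μ 𝒢 X η j ω * auxZ μ 𝒢 X η k ω) :=
    (auxC_SM hmono j).mul ((auxZ_SM hmono hmeas k).mono (hmono hkj'))
  have hprod : Integrable (fun ω => auxZ μ 𝒢 X η j ω * auxZ μ 𝒢 X η k ω) μ :=
    aux_mul_int (auxZ_L2 hle hmono hint hint2 j) (auxZ_L2 hle hmono hint hint2 k)
  have hEq : (fun ω => auxZ μ 𝒢 X η j ω * auxZ μ 𝒢 X η k ω)
      = fun ω => (auxC μ 𝒢 X η j ω * auxZ μ 𝒢 X η k ω) * auxY μ 𝒢 X j ω := by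
    funext ω; simp only [auxZ]; ring
  rw [hEq] at hprod ⊢
  have hpull : μ[(fun ω => (auxC μ 𝒢 X η j ω * auxZ μ 𝒢 X η k ω) * auxY μ 𝒢 X j ω)|𝒢 (j-1)]
      =ᵐ[μ] fun ω => (auxC μ 𝒢 X η j ω * auxZ μ 𝒢 X η k ω) * (μ[auxY μ 𝒢 X j|𝒢 (j-1)]) ω := by
    exact condExp_mul_of_stronglyMeasurable_left hWSM hprod
      ((hint j).sub integrable_condExp)
  have hzero : μ[(fun ω => (auxC μ 𝒢 X η j ω * auxZ μ 𝒢 X η k ω) * auxY μ 𝒢 X j ω)|𝒢 (j-1)]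
      =ᵐ[μ] 0 := by
    refine hpull.trans ?_
    filter_upwards [auxY_condexp_zero hle hint j] with ω hω
    rw [hω]; simp
  rw [← integral_condExp hm (f := fun ω => (auxC μ 𝒢 X η j ω * auxZ μ 𝒢 X η k ω) * auxY μ 𝒢 X j ω),
    integral_congr_ae hzero]
  simp

include hle hmono hint hint2 in
lemma aux_diag (k : ℕ) :
    ∫ ω, auxZ μ 𝒢 X η k ω * auxZ μ 𝒢 X η k ω ∂μ
      ≤ ∫ ω, auxC μ 𝒢 X η k ω * auxG μ 𝒢 X k ω ∂μ := by
  have hm : 𝒢 (k-1) ≤ m0 := hle _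
  have hY2 := auxY_L2 hle hint hint2 k
  have hq2 := auxQ_L2 hle hint hint2 k
  have hX2 := auxX_L2 hint hint2 k
  have hYYint : Integrable (fun ω => auxY μ 𝒢 X k ω * auxY μ 𝒢 X k ω) μ :=
    aux_mul_int hY2 hY2
  have hcYYint : Integrable (fun ω => auxC μ 𝒢 X η k ω * (auxY μ 𝒢 X k ω * auxY μ 𝒢 X k ω)) μ := by
    refine Integrable.mono' hYYint
      ((((auxC_SM hmono k).mono hm).aestronglyMeasurable).mul hYYint.aestronglyMeasurable)
      (Eventually.of_forall fun ω => ?_)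
    rw [Real.norm_eq_abs, abs_mul]
    rcases auxC_mem μ 𝒢 X η k ω with h | h <;>
      simp [h, abs_mul, mul_self_nonneg, abs_mul_self, le_abs_self]
  have hZZeq : (fun ω => auxZ μ 𝒢 X η k ω * auxZ μ 𝒢 X η k ω)
      = fun ω => auxC μ 𝒢 X η k ω * (auxY μ 𝒢 X k ω * auxY μ 𝒢 X k ω) := by
    funext ω
    rcases auxC_mem μ 𝒢 X η k ω with h | h <;> simp [auxZ, h] <;> ring
  -- conditional second moment bound
  have hqX : Integrable (fun ω => (2 * auxQ μ 𝒢 X k ω) * X k ω) μ :=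
    aux_mul_int (hq2.const_mul 2) hX2
  have hqq : Integrable (fun ω => auxQ μ 𝒢 X k ω * auxQ μ 𝒢 X k ω) μ :=
    aux_mul_int hq2 hq2
  have hYYeq : (fun ω => auxY μ 𝒢 X k ω * auxY μ 𝒢 X k ω)
      = fun ω => X k ω ^ 2 - ((2 * auxQ μ 𝒢 X k ω) * X k ω - auxQ μ 𝒢 X k ω * auxQ μ 𝒢 X k ω) := by
    funext ω; simp only [auxY]; ring
  have hce1 : μ[fun ω => auxY μ 𝒢 X k ω * auxY μ 𝒢 X k ω|𝒢 (k-1)] =ᵐ[μ]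
      μ[fun ω => X k ω ^ 2|𝒢 (k-1)]
        - μ[fun ω => (2 * auxQ μ 𝒢 X k ω) * X k ω - auxQ μ 𝒢 X k ω * auxQ μ 𝒢 X k ω|𝒢 (k-1)] := by
    rw [hYYeq]
    exact condExp_sub (hint2 k) (hqX.sub hqq) _
  have hce2 : μ[fun ω => (2 * auxQ μ 𝒢 X k ω) * X k ω - auxQ μ 𝒢 X k ω * auxQ μ 𝒢 X k ω|𝒢 (k-1)]
      =ᵐ[μ] μ[fun ω => (2 * auxQ μ 𝒢 X k ω) * X k ω|𝒢 (k-1)]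
        - μ[fun ω => auxQ μ 𝒢 X k ω * auxQ μ 𝒢 X k ω|𝒢 (k-1)] :=
    condExp_sub hqX hqq _
  have hce3 : μ[fun ω => (2 * auxQ μ 𝒢 X k ω) * X k ω|𝒢 (k-1)]
      =ᵐ[μ] fun ω => (2 * auxQ μ 𝒢 X k ω) * (μ[X k|𝒢 (k-1)]) ω :=
    condExp_mul_of_stronglyMeasurable_left (stronglyMeasurable_condExp.const_mul 2) hqX (hint k)
  have hce4 : μ[fun ω => auxQ μ 𝒢 X k ω * auxQ μ 𝒢 X k ω|𝒢 (k-1)]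
      = fun ω => auxQ μ 𝒢 X k ω * auxQ μ 𝒢 X k ω :=
    condExp_of_stronglyMeasurable hm
      (stronglyMeasurable_condExp.mul stronglyMeasurable_condExp) hqq
  have hYYle : μ[fun ω => auxY μ 𝒢 X k ω * auxY μ 𝒢 X k ω|𝒢 (k-1)] ≤ᵐ[μ] auxG μ 𝒢 X k := by
    filter_upwards [hce1, hce2, hce3] with ω h1 h2 h3
    have h4 : (μ[fun ω => auxQ μ 𝒢 X k ω * auxQ μ 𝒢 X k ω|𝒢 (k-1)]) ω
        = auxQ μ 𝒢 X k ω * auxQ μ 𝒢 X k ω := by rw [hce4]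
    rw [h1, Pi.sub_apply, h2, Pi.sub_apply, h3, h4]
    have hq : (μ[X k|𝒢 (k-1)]) ω = auxQ μ 𝒢 X k ω := rfl
    rw [hq]
    have : (0:ℝ) ≤ auxQ μ 𝒢 X k ω * auxQ μ 𝒢 X k ω := mul_self_nonneg _
    simp only [auxG]
    nlinarith []
  -- pull out the indicator and integrate
  have hpull : μ[(fun ω => auxC μ 𝒢 X η k ω * (auxY μ 𝒢 X k ω * auxY μ 𝒢 X k ω))|𝒢 (k-1)]
      =ᵐ[μ] fun ω => auxC μ 𝒢 X η k ω
        * (μ[fun ω => auxY μ 𝒢 X k ω * auxY μ 𝒢 X k ω|𝒢 (k-1)]) ω :=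
    condExp_mul_of_stronglyMeasurable_left (auxC_SM hmono k) hcYYint hYYint
  have hcond : ∫ ω, auxC μ 𝒢 X η k ω * (auxY μ 𝒢 X k ω * auxY μ 𝒢 X k ω) ∂μ
      = ∫ ω, auxC μ 𝒢 X η k ω
          * (μ[fun ω => auxY μ 𝒢 X k ω * auxY μ 𝒢 X k ω|𝒢 (k-1)]) ω ∂μ := by
    rw [← integral_condExp hm
      (f := fun ω => auxC μ 𝒢 X η k ω * (auxY μ 𝒢 X k ω * auxY μ 𝒢 X k ω))]
    exact integral_congr_ae hpull
  rw [hZZeq, hcond]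
  have hceint : Integrable (μ[fun ω => auxY μ 𝒢 X k ω * auxY μ 𝒢 X k ω|𝒢 (k-1)]) μ :=
    integrable_condExp
  have hgint : Integrable (auxG μ 𝒢 X k) μ := integrable_condExp
  refine integral_mono_ae ?_ ?_ ?_
  · refine Integrable.mono hceint
      ((((auxC_SM hmono k).mono hm).aestronglyMeasurable).mul hceint.aestronglyMeasurable)
      (Eventually.of_forall fun ω => ?_)
    rw [Real.norm_eq_abs, Real.norm_eq_abs, abs_mul]
    rcases auxC_mem μ 𝒢 X η k ω with h | h <;> simp [h, abs_nonneg]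
  · refine Integrable.mono hgint
      ((((auxC_SM hmono k).mono hm).aestronglyMeasurable).mul hgint.aestronglyMeasurable)
      (Eventually.of_forall fun ω => ?_)
    rw [Real.norm_eq_abs, Real.norm_eq_abs, abs_mul]
    rcases auxC_mem μ 𝒢 X η k ω with h | h <;> simp [h, abs_nonneg]
  · filter_upwards [hYYle] with ω hω
    exact mul_le_mul_of_nonneg_left hω (auxC_nonneg μ 𝒢 X η k ω)


/-- Pointwise bound for truncated sums. -/
lemma aux_sum_ind_le {η : ℝ} (hη : 0 ≤ η) (g : ℕ → ℝ) (hg : ∀ k, 0 ≤ g k) (n : ℕ) :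
    ∑ k ∈ Finset.Icc 1 n,
      (if (∑ i ∈ Finset.Icc 1 k, g i) ≤ η then (1:ℝ) else 0) * g k ≤ η := by
  induction n with
  | zero => simpa using hη
  | succ n ih =>
    by_cases h : (∑ i ∈ Finset.Icc 1 (n+1), g i) ≤ η
    · calc ∑ k ∈ Finset.Icc 1 (n+1),
          (if (∑ i ∈ Finset.Icc 1 k, g i) ≤ η then (1:ℝ) else 0) * g k
          ≤ ∑ k ∈ Finset.Icc 1 (n+1), g k := by
            refine Finset.sum_le_sum fun k _ => ?_
            split <;> simp [hg k]
        _ ≤ η := h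
    · rw [Finset.sum_Icc_succ_top (by omega : 1 ≤ n + 1), if_neg h, zero_mul, add_zero]
      exact ih

include hle hmono hmeas hint hint2 in
lemma aux_key (n : ℕ) {ε : ℝ} (hε : 0 < ε) (hη : 0 < η) :
    μ {ω | ε ≤ |∑ k ∈ Finset.Icc 1 n, auxY μ 𝒢 X k ω|}
      ≤ ENNReal.ofReal (η / ε ^ 2)
        + μ {ω | η ≤ |∑ k ∈ Finset.Icc 1 n, auxG μ 𝒢 X k ω|} := by
  set T : Ω → ℝ := fun ω => ∑ k ∈ Finset.Icc 1 n, auxZ μ 𝒢 X η k ω with hT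
  have hZ2 := auxZ_L2 hle hmono hint hint2 (μ := μ) (X := X) (η := η)
  have hTmem : MemLp T 2 μ := by
    have h := memLp_finsetSum' (Finset.Icc 1 n) (fun k _ => hZ2 k)
    exact h.ae_eq (Eventually.of_forall fun ω => by simp [hT, Finset.sum_apply])
  have hT2int : Integrable (fun ω => T ω ^ 2) μ :=
    (memLp_two_iff_integrable_sq hTmem.aestronglyMeasurable).mp hTmem
  have hgnn : ∀ᵐ ω ∂μ, ∀ k, 0 ≤ auxG μ 𝒢 X k ω :=
    ae_all_iff.mpr fun k => condExp_nonneg (Eventually.of_forall fun ω => sq_nonneg _)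
  have hcgint : ∀ k, Integrable (fun ω => auxC μ 𝒢 X η k ω * auxG μ 𝒢 X k ω) μ := by
    intro k
    refine Integrable.mono (integrable_condExp (m := 𝒢 (k-1)) (f := fun ω' => X k ω' ^ 2))
      ((((auxC_SM hmono k).mono (hle _)).aestronglyMeasurable).mul
        (integrable_condExp).aestronglyMeasurable)
      (Eventually.of_forall fun ω => ?_)
    rw [Real.norm_eq_abs, Real.norm_eq_abs, abs_mul]
    rcases auxC_mem μ 𝒢 X η k ω with h | h <;> simp [h, abs_nonneg, auxG]
  -- second moment bound
  have hET2 : ∫ ω, T ω ^ 2 ∂μ ≤ η := by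
    have hexp : ∫ ω, T ω ^ 2 ∂μ = ∑ j ∈ Finset.Icc 1 n, ∑ k ∈ Finset.Icc 1 n,
        ∫ ω, auxZ μ 𝒢 X η j ω * auxZ μ 𝒢 X η k ω ∂μ := by
      have : (fun ω => T ω ^ 2) = fun ω => ∑ j ∈ Finset.Icc 1 n, ∑ k ∈ Finset.Icc 1 n,
          auxZ μ 𝒢 X η j ω * auxZ μ 𝒢 X η k ω := by
        funext ω; rw [hT, sq, Finset.sum_mul_sum]
      rw [this, integral_finset_sum _ (fun j _ =>
        integrable_finset_sum _ (fun k _ => aux_mul_int (hZ2 j) (hZ2 k)))]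
      exact Finset.sum_congr rfl fun j _ =>
        integral_finset_sum _ fun k _ => aux_mul_int (hZ2 j) (hZ2 k)
    have hdiag_sum : ∑ j ∈ Finset.Icc 1 n, ∑ k ∈ Finset.Icc 1 n,
        ∫ ω, auxZ μ 𝒢 X η j ω * auxZ μ 𝒢 X η k ω ∂μ
        = ∑ j ∈ Finset.Icc 1 n, ∫ ω, auxZ μ 𝒢 X η j ω * auxZ μ 𝒢 X η j ω ∂μ := by
      refine Finset.sum_congr rfl fun j hj => ?_
      refine Finset.sum_eq_single_of_mem j hj fun k hk hne => ?_
      rcases hne.lt_or_gt with h | h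
      · exact aux_cross hle hmono hmeas hint hint2 hk hj h
      · have : (fun ω => auxZ μ 𝒢 X η j ω * auxZ μ 𝒢 X η k ω)
            = fun ω => auxZ μ 𝒢 X η k ω * auxZ μ 𝒢 X η j ω := by
          funext ω; ring
        rw [this]
        exact aux_cross hle hmono hmeas hint hint2 hj hk h
    calc ∫ ω, T ω ^ 2 ∂μ
        = ∑ j ∈ Finset.Icc 1 n, ∫ ω, auxZ μ 𝒢 X η j ω * auxZ μ 𝒢 X η j ω ∂μ := by
          rw [hexp, hdiag_sum]
      _ ≤ ∑ j ∈ Finset.Icc 1 n, ∫ ω, auxC μ 𝒢 X η j ω * auxG μ 𝒢 X j ω ∂μ :=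
          Finset.sum_le_sum fun j _ => aux_diag hle hmono hint hint2 j
      _ = ∫ ω, ∑ j ∈ Finset.Icc 1 n, auxC μ 𝒢 X η j ω * auxG μ 𝒢 X j ω ∂μ :=
          (integral_finset_sum _ fun j _ => hcgint j).symm
      _ ≤ ∫ _ω, η ∂μ := by
          refine integral_mono_ae (integrable_finset_sum _ fun j _ => hcgint j)
            (integrable_const η) ?_
          filter_upwards [hgnn] with ω hω
          exact aux_sum_ind_le hη.le (fun i => auxG μ 𝒢 X i ω) hω n
      _ = η := by simp
  -- Chebyshev
  have hcheb : μ {ω | ε ≤ |T ω|} ≤ ENNReal.ofReal (η / ε ^ 2) := by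
    have hsub : {ω | ε ≤ |T ω|} ⊆ {ω | ε ^ 2 ≤ T ω ^ 2} := fun ω hω => by
      have h := pow_le_pow_left₀ hε.le hω 2
      rwa [sq_abs] at h
    have hMar := mul_meas_ge_le_integral_of_nonneg (μ := μ) (f := fun ω => T ω ^ 2)
      (Eventually.of_forall fun ω => sq_nonneg _) hT2int (ε ^ 2)
    have hne : μ {x | ε ^ 2 ≤ T x ^ 2} ≠ ⊤ := measure_ne_top μ _
    have h1 : (μ {x | ε ^ 2 ≤ T x ^ 2}).toReal ≤ η / ε ^ 2 := by
      rw [le_div_iff₀ (by positivity)]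
      nlinarith [show ε ^ 2 * (μ {x | ε ^ 2 ≤ T x ^ 2}).toReal ≤ ∫ x, T x ^ 2 ∂μ from hMar, hET2]
    calc μ {ω | ε ≤ |T ω|} ≤ μ {ω | ε ^ 2 ≤ T ω ^ 2} := measure_mono hsub
      _ = ENNReal.ofReal ((μ {ω | ε ^ 2 ≤ T ω ^ 2}).toReal) := (ENNReal.ofReal_toReal hne).symm
      _ ≤ ENNReal.ofReal (η / ε ^ 2) := ENNReal.ofReal_le_ofReal h1
  -- union bound
  have hunion : μ {ω | ε ≤ |∑ k ∈ Finset.Icc 1 n, auxY μ 𝒢 X k ω|}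
      ≤ μ {ω | ε ≤ |T ω|} + μ {ω | η ≤ |∑ k ∈ Finset.Icc 1 n, auxG μ 𝒢 X k ω|} := by
    refine le_trans (measure_mono_ae ?_) (measure_union_le _ _)
    filter_upwards [hgnn] with ω hω hmem
    by_cases hG : η ≤ |∑ k ∈ Finset.Icc 1 n, auxG μ 𝒢 X k ω|
    · exact Or.inr hG
    · left
      have hGlt : ∑ k ∈ Finset.Icc 1 n, auxG μ 𝒢 X k ω < η :=
        lt_of_le_of_lt (le_abs_self _) (not_le.mp hG)
      have hTM : T ω = ∑ k ∈ Finset.Icc 1 n, auxY μ 𝒢 X k ω := by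
        refine Finset.sum_congr rfl fun k hk => ?_
        have hkn : k ≤ n := (Finset.mem_Icc.mp hk).2
        have hle' : ∑ i ∈ Finset.Icc 1 k, auxG μ 𝒢 X i ω ≤ η :=
          le_of_lt (lt_of_le_of_lt (Finset.sum_le_sum_of_subset_of_nonneg
            (Finset.Icc_subset_Icc_right hkn) (fun i _ _ => hω i)) hGlt)
        simp [auxZ, auxC, if_pos hle']
      show ε ≤ |T ω|
      rw [hTM]
      exact hmem
  exact hunion.trans (add_le_add_left hcheb _)


lemma aux_tim_add {f g : ℕ → Ω → ℝ} {F G : Ω → ℝ}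
    (hf : TendstoInMeasure μ f atTop F) (hg : TendstoInMeasure μ g atTop G) :
    TendstoInMeasure μ (fun n ω => f n ω + g n ω) atTop (fun ω => F ω + G ω) := by
  rw [tendstoInMeasure_iff_dist] at hf hg ⊢
  intro ε hε
  have hbound : ∀ n, μ {ω | ε ≤ dist (f n ω + g n ω) (F ω + G ω)}
      ≤ μ {ω | ε/2 ≤ dist (f n ω) (F ω)} + μ {ω | ε/2 ≤ dist (g n ω) (G ω)} := by
    intro n
    refine le_trans (measure_mono ?_) (measure_union_le _ _)
    intro ω hω
    simp only [Set.mem_setOf_eq] at hω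
    by_contra hc
    simp only [Set.mem_union, Set.mem_setOf_eq, not_or, not_le] at hc
    have hd := dist_add_add_le (f n ω) (g n ω) (F ω) (G ω)
    linarith [hc.1, hc.2]
  have h0 : Tendsto (fun n => μ {ω | ε/2 ≤ dist (f n ω) (F ω)}
      + μ {ω | ε/2 ≤ dist (g n ω) (G ω)}) atTop (𝓝 0) := by
    have := (hf (ε/2) (half_pos hε)).add (hg (ε/2) (half_pos hε))
    simpa using this
  exact tendsto_of_tendsto_of_tendsto_of_le_of_le tendsto_const_nhds h0
    (fun n => zero_le) hbound

end Aux

open MeasureTheory Filter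

/-- Lemma 9 of Genon-Catalot and Jacod (1993): for a triangular array `(X_{n,k})` with
`X_{n,k}` measurable w.r.t. the filtration `ℱ n k`, if
`Σ_{k=1}^n E[X_{n,k}|ℱ_{k-1}] → U` and `Σ_{k=1}^n E[X_{n,k}²|ℱ_{k-1}] → 0` in probability,
then `Σ_{k=1}^n X_{n,k} → U` in probability. -/
theorem stmt16 {Ω : Type*} {m0 : MeasurableSpace Ω} (μ : Measure Ω) [IsProbabilityMeasure μ]
    (ℱ : ℕ → ℕ → MeasurableSpace Ω)
    (hℱle : ∀ n k, ℱ n k ≤ m0)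
    (hℱmono : ∀ n, Monotone (ℱ n))
    (X : ℕ → ℕ → Ω → ℝ)
    (hmeas : ∀ n k, StronglyMeasurable[ℱ n k] (X n k))
    (hint : ∀ n k, Integrable (X n k) μ)
    (hint2 : ∀ n k, Integrable (fun ω => (X n k ω) ^ 2) μ)
    (U : Ω → ℝ)
    (h1 : TendstoInMeasure μ
      (fun n ω => ∑ k ∈ Finset.Icc 1 n, (μ[X n k|ℱ n (k - 1)]) ω) atTop U)
    (h2 : TendstoInMeasure μ
      (fun n ω => ∑ k ∈ Finset.Icc 1 n, (μ[fun ω' => (X n k ω') ^ 2|ℱ n (k - 1)]) ω) atTop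
      (fun _ => 0)) :
    TendstoInMeasure μ (fun n ω => ∑ k ∈ Finset.Icc 1 n, X n k ω) atTop U := by
  -- the martingale part tends to zero in measure
  have hM : TendstoInMeasure μ
      (fun n ω => ∑ k ∈ Finset.Icc 1 n, auxY μ (ℱ n) (X n) k ω) atTop (fun _ => (0:ℝ)) := by
    rw [tendstoInMeasure_iff_dist]
    intro ε hε
    rw [ENNReal.tendsto_atTop_zero]
    intro δ hδ
    have hhalf : (0:ENNReal) < δ/2 := ENNReal.half_pos hδ.ne'
    set δ' : ENNReal := min (δ/2) 1 with hδ'def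
    have hδ'pos : 0 < δ' := lt_min hhalf zero_lt_one
    have hδ'top : δ' ≠ ⊤ := ne_top_of_le_ne_top ENNReal.one_ne_top (min_le_right _ _)
    set η : ℝ := ε^2 * δ'.toReal with hηdef
    have hη : 0 < η := mul_pos (by positivity) (ENNReal.toReal_pos hδ'pos.ne' hδ'top)
    have hev := (tendsto_order.mp (tendstoInMeasure_iff_dist.mp h2 η hη)).2 (δ/2) hhalf
    obtain ⟨N, hN⟩ := eventually_atTop.mp hev
    refine ⟨N, fun n hn => ?_⟩
    have hkey := aux_key (hℱle n) (hℱmono n) (hmeas n) (hint n) (hint2 n)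
      (μ := μ) (η := η) n hε hη
    have hset1 : {ω | ε ≤ dist (∑ k ∈ Finset.Icc 1 n, auxY μ (ℱ n) (X n) k ω) ((fun _ => (0:ℝ)) ω)}
        = {ω | ε ≤ |∑ k ∈ Finset.Icc 1 n, auxY μ (ℱ n) (X n) k ω|} := by
      simp [Real.dist_eq]
    have hset2 : {ω | η ≤ |∑ k ∈ Finset.Icc 1 n, auxG μ (ℱ n) (X n) k ω|}
        = {ω | η ≤ dist (∑ k ∈ Finset.Icc 1 n, (μ[fun ω' => (X n k ω') ^ 2|ℱ n (k - 1)]) ω)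
            ((fun _ => (0:ℝ)) ω)} := by
      simp [Real.dist_eq, auxG]
    have hofr : ENNReal.ofReal (η / ε^2) = δ' := by
      rw [hηdef, mul_comm, mul_div_assoc, div_self (by positivity : (ε:ℝ)^2 ≠ 0), mul_one,
        ENNReal.ofReal_toReal hδ'top]
    calc μ {ω | ε ≤ dist (∑ k ∈ Finset.Icc 1 n, auxY μ (ℱ n) (X n) k ω) ((fun _ => (0:ℝ)) ω)}
        = μ {ω | ε ≤ |∑ k ∈ Finset.Icc 1 n, auxY μ (ℱ n) (X n) k ω|} := by rw [hset1]
      _ ≤ ENNReal.ofReal (η / ε^2)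
          + μ {ω | η ≤ |∑ k ∈ Finset.Icc 1 n, auxG μ (ℱ n) (X n) k ω|} := hkey
      _ ≤ δ/2 + δ/2 := by
          refine add_le_add ?_ ?_
          · rw [hofr]; exact min_le_left _ _
          · rw [hset2]; exact (hN n hn).le
      _ = δ := ENNReal.add_halves δ
  have hsum := aux_tim_add hM h1
  refine TendstoInMeasure.congr_right (Eventually.of_forall fun ω => zero_add (U ω))
    (TendstoInMeasure.congr_left (fun n => Eventually.of_forall fun ω => ?_) hsum)
  simp only [auxY, auxQ, Finset.sum_sub_distrib]
  ring
end
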